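/- arXiv:1109.1529 — 4 statements merged into one kernel-verified Lean document; each statement's English description precedes it below -/
import Mathlib

section
/- The map σ satisfies the braid equation: (σ ⊗ id_V) ∘ (id_V ⊗ σ) ∘ (σ ⊗ id_V) = (id_V ⊗ σ) ∘ (σ ⊗ id_V) ∘ (id_V ⊗ σ) as linear maps on V ⊗ V ⊗ V. -/
open TensorProduct

noncomputable section

/-- The 3-dimensional complex vector space with basis `ω 0 = ω₋`, `ω 1 = ω₊`, `ω 2 = ω_z`. -/
abbrev V : Type := Fin 3 → ℂ

/-- The distinguished basis `(ω₋, ω₊, ω_z)` of `V`. -/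
def ω : Fin 3 → V := fun i => Pi.basisFun ℂ (Fin 3) i

/-- The basis `ω_a ⊗ ω_b` of `V ⊗ V`. -/
def basisVV : Module.Basis (Fin 3 × Fin 3) ℂ (V ⊗[ℂ] V) :=
  (Pi.basisFun ℂ (Fin 3)).tensorProduct (Pi.basisFun ℂ (Fin 3))

/-- The values of the braiding `σ` on the basis vectors `ω_a ⊗ ω_b`
(first index `0 = −`, `1 = +`, `2 = z`). -/
def σval (q : ℝ) : Fin 3 → Fin 3 → V ⊗[ℂ] V :=
  ![![ω 0 ⊗ₜ[ℂ] ω 0,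
     (1 - (q : ℂ) ^ 2) • (ω 0 ⊗ₜ[ℂ] ω 1) + ((q : ℂ) ^ 2)⁻¹ • (ω 1 ⊗ₜ[ℂ] ω 0),
     (1 - (q : ℂ) ^ 2) • (ω 0 ⊗ₜ[ℂ] ω 2) + ((q : ℂ) ^ 4)⁻¹ • (ω 2 ⊗ₜ[ℂ] ω 0)],
    ![(q : ℂ) ^ 4 • (ω 0 ⊗ₜ[ℂ] ω 1),
      ω 1 ⊗ₜ[ℂ] ω 1,
      (q : ℂ) ^ 6 • (ω 2 ⊗ₜ[ℂ] ω 1)],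
    ![(q : ℂ) ^ 6 • (ω 0 ⊗ₜ[ℂ] ω 2),
      (1 - (q : ℂ) ^ 2) • (ω 2 ⊗ₜ[ℂ] ω 1) + ((q : ℂ) ^ 4)⁻¹ • (ω 1 ⊗ₜ[ℂ] ω 2),
      ω 2 ⊗ₜ[ℂ] ω 2]]

/-- The braiding `σ` of Woronowicz's 3d left covariant calculus on `SU_q(2)`. -/
def σmap (q : ℝ) : (V ⊗[ℂ] V) →ₗ[ℂ] (V ⊗[ℂ] V) :=
  basisVV.constr ℂ (fun p => σval q p.1 p.2)

/-- `σ₁ = σ ⊗ id` acting on the first two tensor slots of `V ⊗ V ⊗ V`. -/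
def σ₁ (q : ℝ) : (V ⊗[ℂ] (V ⊗[ℂ] V)) →ₗ[ℂ] (V ⊗[ℂ] (V ⊗[ℂ] V)) :=
  (TensorProduct.assoc ℂ V V V).toLinearMap ∘ₗ
    (TensorProduct.map (σmap q) LinearMap.id) ∘ₗ
      (TensorProduct.assoc ℂ V V V).symm.toLinearMap

/-- `σ₂ = id ⊗ σ` acting on the last two tensor slots of `V ⊗ V ⊗ V`. -/
def σ₂ (q : ℝ) : (V ⊗[ℂ] (V ⊗[ℂ] V)) →ₗ[ℂ] (V ⊗[ℂ] (V ⊗[ℂ] V)) :=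
  TensorProduct.map LinearMap.id (σmap q)

lemma σmap_apply (q : ℝ) (a b : Fin 3) : σmap q (ω a ⊗ₜ[ℂ] ω b) = σval q a b := by
  rw [show ω a ⊗ₜ[ℂ] ω b = basisVV (a, b) from by
    simp [basisVV, Module.Basis.tensorProduct_apply, ω]]
  exact basisVV.constr_basis ℂ (fun p : Fin 3 × Fin 3 => σval q p.1 p.2) (a, b)

set_option maxHeartbeats 2000000 in
/-- the braiding `σ` satisfies the braid equation
`(σ⊗id) ∘ (id⊗σ) ∘ (σ⊗id) = (id⊗σ) ∘ (σ⊗id) ∘ (id⊗σ)` on `V ⊗ V ⊗ V`. -/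
theorem braid_equation (q : ℝ) (hq0 : 0 < q) (hq1 : q < 1) :
    σ₁ q ∘ₗ σ₂ q ∘ₗ σ₁ q = σ₂ q ∘ₗ σ₁ q ∘ₗ σ₂ q := by
  have hq : (q : ℂ) ≠ 0 := Complex.ofReal_ne_zero.mpr hq0.ne'
  apply ((Pi.basisFun ℂ (Fin 3)).tensorProduct basisVV).ext
  rintro ⟨a, b, c⟩
  have h : ((Pi.basisFun ℂ (Fin 3)).tensorProduct basisVV) (a, b, c)
      = ω a ⊗ₜ[ℂ] (ω b ⊗ₜ[ℂ] ω c) := by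
    simp [basisVV, Module.Basis.tensorProduct_apply, ω]
  rw [h]
  fin_cases a <;> fin_cases b <;> fin_cases c <;>
    (simp only [σ₁, σ₂, LinearMap.comp_apply, LinearEquiv.coe_coe, assoc_symm_tmul, assoc_tmul,
      TensorProduct.map_tmul, LinearMap.id_coe, id_eq, Fin.zero_eta, Fin.mk_one, Fin.reduceFinMk,
      σmap_apply, σval, Fin.isValue,
      Matrix.cons_val', Matrix.cons_val_zero, Matrix.cons_val_one, Matrix.head_cons,
      Matrix.empty_val', Matrix.cons_val_fin_one, Matrix.head_fin_const, Matrix.tail_cons,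
      tmul_add, add_tmul, ← smul_tmul', tmul_smul, map_add, map_smul, Matrix.cons_val_two,
      smul_add, smul_smul]) <;>
    match_scalars <;> (field_simp; try ring; try tauto)

end
end

section
/- The map σ is bijective, and σ ∘ σ ≠ id_{V⊗V}. -/
open TensorProduct

noncomputable section

lemma basisVV_eq (a b : Fin 3) : basisVV (a, b) = ω a ⊗ₜ[ℂ] ω b := by
  simp [basisVV, Module.Basis.tensorProduct_apply', ω]

/-- The values of the inverse of `σ` on the basis vectors. -/
def τval (q : ℝ) : Fin 3 → Fin 3 → V ⊗[ℂ] V :=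
  ![![ω 0 ⊗ₜ[ℂ] ω 0,
     ((q:ℂ)^4)⁻¹ • (ω 1 ⊗ₜ[ℂ] ω 0),
     ((q:ℂ)^6)⁻¹ • (ω 2 ⊗ₜ[ℂ] ω 0)],
    ![(q:ℂ)^2 • (ω 0 ⊗ₜ[ℂ] ω 1) - (((q:ℂ)^2)⁻¹ * (1 - (q:ℂ)^2)) • (ω 1 ⊗ₜ[ℂ] ω 0),
      ω 1 ⊗ₜ[ℂ] ω 1,
      (q:ℂ)^4 • (ω 2 ⊗ₜ[ℂ] ω 1) - (((q:ℂ)^2)⁻¹ * (1 - (q:ℂ)^2)) • (ω 1 ⊗ₜ[ℂ] ω 2)],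
    ![(q:ℂ)^4 • (ω 0 ⊗ₜ[ℂ] ω 2) - (((q:ℂ)^2)⁻¹ * (1 - (q:ℂ)^2)) • (ω 2 ⊗ₜ[ℂ] ω 0),
      ((q:ℂ)^6)⁻¹ • (ω 1 ⊗ₜ[ℂ] ω 2),
      ω 2 ⊗ₜ[ℂ] ω 2]]

/-- The inverse of `σ`. -/
def τmap (q : ℝ) : (V ⊗[ℂ] V) →ₗ[ℂ] (V ⊗[ℂ] V) :=
  basisVV.constr ℂ (fun p => τval q p.1 p.2)

lemma τmap_apply (q : ℝ) (a b : Fin 3) : τmap q (ω a ⊗ₜ[ℂ] ω b) = τval q a b := by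
  rw [τmap, ← basisVV_eq, Module.Basis.constr_basis]

set_option linter.unnecessarySeqFocus false in
lemma στ (q : ℝ) (hq : (q:ℂ) ≠ 0) : σmap q ∘ₗ τmap q = LinearMap.id := by
  apply basisVV.ext
  rintro ⟨a, b⟩
  rw [basisVV_eq]
  fin_cases a <;> fin_cases b <;>
    simp [τmap_apply, σval, τval, map_add, map_sub, map_smul, σmap_apply] <;>
    match_scalars <;> field_simp <;> ring

set_option linter.unnecessarySeqFocus false in
lemma τσ (q : ℝ) (hq : (q:ℂ) ≠ 0) : τmap q ∘ₗ σmap q = LinearMap.id := by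
  apply basisVV.ext
  rintro ⟨a, b⟩
  rw [basisVV_eq]
  fin_cases a <;> fin_cases b <;>
    simp [τmap_apply, σval, τval, map_add, map_sub, map_smul, σmap_apply] <;>
    match_scalars <;> field_simp <;> ring

/-- `σ` is bijective and `σ ∘ σ ≠ id`. -/
theorem sigma_bijective_and_not_involutive (q : ℝ) (hq0 : 0 < q) (hq1 : q < 1) :
    Function.Bijective (σmap q) ∧
      σmap q ∘ₗ σmap q ≠ (LinearMap.id : (V ⊗[ℂ] V) →ₗ[ℂ] (V ⊗[ℂ] V)) := by
  have hq : (q : ℂ) ≠ 0 := by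
    exact_mod_cast ne_of_gt hq0
  constructor
  · refine Function.bijective_iff_has_inverse.mpr ⟨τmap q, ?_, ?_⟩
    · intro x
      exact congrArg (fun f => f x) (τσ q hq)
    · intro x
      exact congrArg (fun f => f x) (στ q hq)
  · intro h
    have h2 := congrArg (fun f => basisVV.repr (f (ω 0 ⊗ₜ[ℂ] ω 1)) (1, 0)) h
    simp only [LinearMap.comp_apply, LinearMap.id_apply] at h2
    rw [σmap_apply] at h2
    have key : σmap q (σval q 0 1) =
        ((1 - (q : ℂ) ^ 2) ^ 2 + (q:ℂ)^2) • (ω 0 ⊗ₜ[ℂ] ω 1) +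
          ((1 - (q : ℂ) ^ 2) * ((q : ℂ) ^ 2)⁻¹) • (ω 1 ⊗ₜ[ℂ] ω 0) := by
      simp [σval, map_add, map_smul, σmap_apply]
      match_scalars <;> field_simp <;> ring
    rw [key] at h2
    simp only [← basisVV_eq] at h2
    simp [Finsupp.single_apply] at h2
    rcases h2 with h2 | h2
    · have h3 : (q:ℂ)^2 = 1 := by linear_combination -h2
      have h4 : q^2 = 1 := by exact_mod_cast h3
      nlinarith
    · exact hq (by exact_mod_cast h2)

end
end

section
/- The range of the order-2 braided antisymmetriser A⁽²⁾ := id_{V⊗V} − σ has dimension 3 (the classical dimension 3!/(2!·1!) of the space of 2-forms). -/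
open TensorProduct

noncomputable section

/-- The order-2 braided antisymmetriser `A⁽²⁾ = id − σ`. -/
def A2 (q : ℝ) : (V ⊗[ℂ] V) →ₗ[ℂ] (V ⊗[ℂ] V) := LinearMap.id - σmap q

lemma basisVV_apply (p : Fin 3 × Fin 3) : basisVV p = ω p.1 ⊗ₜ[ℂ] ω p.2 := by
  simp [basisVV, ω, Module.Basis.tensorProduct_apply']

lemma σmap_apply_s3 (q : ℝ) (p : Fin 3 × Fin 3) : σmap q (basisVV p) = σval q p.1 p.2 :=
  Module.Basis.constr_basis _ _ _ _

lemma A2_apply (q : ℝ) (p : Fin 3 × Fin 3) :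
    A2 q (basisVV p) = ω p.1 ⊗ₜ[ℂ] ω p.2 - σval q p.1 p.2 := by
  simp only [A2, LinearMap.sub_apply, LinearMap.id_apply, σmap_apply_s3]
  rw [basisVV_apply]

/-- The three spanning vectors of the range. -/
def w (q : ℝ) : Fin 3 → V ⊗[ℂ] V :=
  ![(q : ℂ) ^ 2 • (ω 0 ⊗ₜ[ℂ] ω 1) - ((q : ℂ) ^ 2)⁻¹ • (ω 1 ⊗ₜ[ℂ] ω 0),
    (q : ℂ) ^ 2 • (ω 0 ⊗ₜ[ℂ] ω 2) - ((q : ℂ) ^ 4)⁻¹ • (ω 2 ⊗ₜ[ℂ] ω 0),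
    (q : ℂ) ^ 2 • (ω 2 ⊗ₜ[ℂ] ω 1) - ((q : ℂ) ^ 4)⁻¹ • (ω 1 ⊗ₜ[ℂ] ω 2)]

/-- the range of `A⁽²⁾ = id − σ` has dimension `3 = 3!/(2!·1!)`. -/
theorem A2_rank (q : ℝ) (hq0 : 0 < q) (hq1 : q < 1) :
    Module.finrank ℂ (LinearMap.range (A2 q)) = 3 := by
  have hq : (q : ℂ) ≠ 0 := by exact_mod_cast hq0.ne'
  have hq2 : ((q : ℂ) ^ 2) ≠ 0 := pow_ne_zero _ hq
  have hq4 : ((q : ℂ) ^ 4) ≠ 0 := pow_ne_zero _ hq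
  set S := Submodule.span ℂ (Set.range (w q)) with hS
  have mem0 : w q 0 ∈ S := Submodule.subset_span ⟨0, rfl⟩
  have mem1 : w q 1 ∈ S := Submodule.subset_span ⟨1, rfl⟩
  have mem2 : w q 2 ∈ S := Submodule.subset_span ⟨2, rfl⟩
  -- A2 on each basis vector, expressed inside S
  have key : ∀ a b : Fin 3, A2 q (basisVV (a, b)) ∈ S := by
    have h00 : A2 q (basisVV ((0 : Fin 3), (0 : Fin 3))) = 0 := by
      rw [A2_apply]; simp [σval]
    have h11 : A2 q (basisVV ((1 : Fin 3), (1 : Fin 3))) = 0 := by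
      rw [A2_apply]; simp [σval]
    have h22 : A2 q (basisVV ((2 : Fin 3), (2 : Fin 3))) = 0 := by
      rw [A2_apply]; simp [σval]
    have h01 : A2 q (basisVV ((0 : Fin 3), (1 : Fin 3))) = w q 0 := by
      rw [A2_apply]; simp only [σval, w, Matrix.cons_val_zero, Matrix.cons_val_one,
        Matrix.head_cons]
      module
    have h02 : A2 q (basisVV ((0 : Fin 3), (2 : Fin 3))) = w q 1 := by
      rw [A2_apply]; simp only [σval, w, Matrix.cons_val_zero, Matrix.cons_val_one,
        Matrix.head_cons, Matrix.cons_val_two, Matrix.tail_cons]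
      module
    have h21 : A2 q (basisVV ((2 : Fin 3), (1 : Fin 3))) = w q 2 := by
      rw [A2_apply]; simp only [σval, w, Matrix.cons_val_zero, Matrix.cons_val_one,
        Matrix.head_cons, Matrix.cons_val_two, Matrix.tail_cons]
      module
    have h10 : A2 q (basisVV ((1 : Fin 3), (0 : Fin 3))) = (-(q : ℂ) ^ 2) • w q 0 := by
      rw [A2_apply]; simp only [σval, w, Matrix.cons_val_zero, Matrix.cons_val_one,
        Matrix.head_cons]
      match_scalars <;> field_simp <;> ring
    have h20 : A2 q (basisVV ((2 : Fin 3), (0 : Fin 3))) = (-(q : ℂ) ^ 4) • w q 1 := by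
      rw [A2_apply]; simp only [σval, w, Matrix.cons_val_zero, Matrix.cons_val_one,
        Matrix.head_cons, Matrix.cons_val_two, Matrix.tail_cons]
      match_scalars <;> field_simp <;> ring
    have h12 : A2 q (basisVV ((1 : Fin 3), (2 : Fin 3))) = (-(q : ℂ) ^ 4) • w q 2 := by
      rw [A2_apply]; simp only [σval, w, Matrix.cons_val_zero, Matrix.cons_val_one,
        Matrix.head_cons, Matrix.cons_val_two, Matrix.tail_cons]
      match_scalars <;> field_simp <;> ring
    intro a b
    fin_cases a <;> fin_cases b
    · exact h00 ▸ Submodule.zero_mem S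
    · exact h01 ▸ mem0
    · exact h02 ▸ mem1
    · exact h10 ▸ Submodule.smul_mem S _ mem0
    · exact h11 ▸ Submodule.zero_mem S
    · exact h12 ▸ Submodule.smul_mem S _ mem2
    · exact h20 ▸ Submodule.smul_mem S _ mem1
    · exact h21 ▸ mem2
    · exact h22 ▸ Submodule.zero_mem S
  have hrange : LinearMap.range (A2 q) = S := by
    have h1 : LinearMap.range (A2 q)
        = Submodule.span ℂ (A2 q '' Set.range basisVV) := by
      rw [LinearMap.range_eq_map, ← basisVV.span_eq, Submodule.map_span]
    rw [h1]
    apply le_antisymm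
    · rw [Submodule.span_le]
      rintro _ ⟨_, ⟨⟨a, b⟩, rfl⟩, rfl⟩
      exact key a b
    · rw [hS, Submodule.span_le]
      rintro _ ⟨i, rfl⟩
      have mk : ∀ p : Fin 3 × Fin 3, A2 q (basisVV p)
          ∈ Submodule.span ℂ (A2 q '' Set.range basisVV) :=
        fun p => Submodule.subset_span ⟨basisVV p, ⟨p, rfl⟩, rfl⟩
      have h01 : A2 q (basisVV ((0 : Fin 3), (1 : Fin 3))) = w q 0 := by
        rw [A2_apply]; simp only [σval, w, Matrix.cons_val_zero, Matrix.cons_val_one,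
          Matrix.head_cons]
        module
      have h02 : A2 q (basisVV ((0 : Fin 3), (2 : Fin 3))) = w q 1 := by
        rw [A2_apply]; simp only [σval, w, Matrix.cons_val_zero, Matrix.cons_val_one,
          Matrix.head_cons, Matrix.cons_val_two, Matrix.tail_cons]
        module
      have h21 : A2 q (basisVV ((2 : Fin 3), (1 : Fin 3))) = w q 2 := by
        rw [A2_apply]; simp only [σval, w, Matrix.cons_val_zero, Matrix.cons_val_one,
          Matrix.head_cons, Matrix.cons_val_two, Matrix.tail_cons]
        module
      have H0 : w q 0 ∈ Submodule.span ℂ (A2 q '' Set.range basisVV) := h01 ▸ mk _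
      have H1 : w q 1 ∈ Submodule.span ℂ (A2 q '' Set.range basisVV) := h02 ▸ mk _
      have H2 : w q 2 ∈ Submodule.span ℂ (A2 q '' Set.range basisVV) := h21 ▸ mk _
      fin_cases i
      · exact H0
      · exact H1
      · exact H2
  rw [hrange, hS]
  have hwb : w q = ![(q : ℂ) ^ 2 • basisVV (0, 1) - ((q : ℂ) ^ 2)⁻¹ • basisVV (1, 0),
      (q : ℂ) ^ 2 • basisVV (0, 2) - ((q : ℂ) ^ 4)⁻¹ • basisVV (2, 0),
      (q : ℂ) ^ 2 • basisVV (2, 1) - ((q : ℂ) ^ 4)⁻¹ • basisVV (1, 2)] := by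
    funext i
    fin_cases i <;> simp [w, basisVV_apply]
  have hli : LinearIndependent ℂ (w q) := by
    rw [Fintype.linearIndependent_iff]
    intro g hg
    have hrep : ∀ p : Fin 3 × Fin 3, basisVV.repr (∑ i, g i • w q i) p = 0 := by
      rw [hg]; simp
    have e01 := hrep (0, 1)
    have e02 := hrep (0, 2)
    have e21 := hrep (2, 1)
    simp only [hwb, Fin.sum_univ_three, Matrix.cons_val_zero, Matrix.cons_val_one,
      Matrix.head_cons, Matrix.cons_val_two, Matrix.tail_cons, map_add, map_sub, map_smul,
      Module.Basis.repr_self, Finsupp.coe_add, Finsupp.coe_sub, Finsupp.coe_smul, Pi.add_apply,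
      Pi.sub_apply, Pi.smul_apply, Finsupp.single_apply, smul_eq_mul] at e01 e02 e21
    simp only [Prod.mk.injEq] at e01 e02 e21
    norm_num [Fin.ext_iff] at e01 e02 e21
    intro i
    fin_cases i
    · exact e01.resolve_right hq0.ne'
    · exact e02.resolve_right hq0.ne'
    · exact e21.resolve_right hq0.ne'
  rw [finrank_span_eq_card hli, Fintype.card_fin]

end
end

section
/- The inverse braiding yields an antisymmetriser with the same degeneracy: the map A⁽²⁾_{σ⁻¹} := id_{V⊗V} − σ⁻¹ satisfies A⁽²⁾_{σ⁻¹} ∘ A⁽²⁾_{σ⁻¹} = (1+q⁻²) · A⁽²⁾_{σ⁻¹} and has rank 3. -/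
open TensorProduct

noncomputable section

def u (q : ℝ) : Fin 3 → V ⊗[ℂ] V :=
  ![(q:ℂ)^2 • (ω 0 ⊗ₜ[ℂ] ω 1) - ((q:ℂ)^2)⁻¹ • (ω 1 ⊗ₜ[ℂ] ω 0),
    (q:ℂ)^2 • (ω 0 ⊗ₜ[ℂ] ω 2) - ((q:ℂ)^4)⁻¹ • (ω 2 ⊗ₜ[ℂ] ω 0),
    (q:ℂ)^2 • (ω 2 ⊗ₜ[ℂ] ω 1) - ((q:ℂ)^4)⁻¹ • (ω 1 ⊗ₜ[ℂ] ω 2)]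
def Amap (q : ℝ) : (V ⊗[ℂ] V) →ₗ[ℂ] (V ⊗[ℂ] V) := LinearMap.id - σmap q
lemma im_diag (q : ℝ) (a : Fin 3) : (Amap q) (ω a ⊗ₜ[ℂ] ω a) = 0 := by
  fin_cases a <;> simp [Amap, σmap_apply, σval]
lemma im01 (q : ℝ) : (Amap q) (ω 0 ⊗ₜ[ℂ] ω 1) = u q 0 := by
  simp only [Amap, LinearMap.sub_apply, LinearMap.id_apply, σmap_apply, σval, u,
    Matrix.cons_val_zero, Matrix.cons_val_one, Matrix.head_cons]
  match_scalars <;> ring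
lemma im10 (q : ℝ) (hq : (q:ℂ) ≠ 0) :
    (Amap q) (ω 1 ⊗ₜ[ℂ] ω 0) = (-(q:ℂ)^2) • u q 0 := by
  simp only [Amap, LinearMap.sub_apply, LinearMap.id_apply, σmap_apply, σval, u,
    Matrix.cons_val_zero, Matrix.cons_val_one, Matrix.head_cons]
  match_scalars <;> field_simp <;> ring
lemma im02 (q : ℝ) : (Amap q) (ω 0 ⊗ₜ[ℂ] ω 2) = u q 1 := by
  simp only [Amap, LinearMap.sub_apply, LinearMap.id_apply, σmap_apply, σval, u,
    Matrix.cons_val_zero, Matrix.cons_val_one, Matrix.head_cons, Matrix.cons_val_two,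
    Matrix.tail_cons]
  match_scalars <;> ring
lemma im20 (q : ℝ) (hq : (q:ℂ) ≠ 0) :
    (Amap q) (ω 2 ⊗ₜ[ℂ] ω 0) = (-(q:ℂ)^4) • u q 1 := by
  simp only [Amap, LinearMap.sub_apply, LinearMap.id_apply, σmap_apply, σval, u,
    Matrix.cons_val_zero, Matrix.cons_val_one, Matrix.head_cons, Matrix.cons_val_two,
    Matrix.tail_cons]
  match_scalars <;> field_simp <;> ring
lemma im21 (q : ℝ) : (Amap q) (ω 2 ⊗ₜ[ℂ] ω 1) = u q 2 := by
  simp only [Amap, LinearMap.sub_apply, LinearMap.id_apply, σmap_apply, σval, u,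
    Matrix.cons_val_zero, Matrix.cons_val_one, Matrix.head_cons, Matrix.cons_val_two,
    Matrix.tail_cons]
  match_scalars <;> ring
lemma im12 (q : ℝ) (hq : (q:ℂ) ≠ 0) :
    (Amap q) (ω 1 ⊗ₜ[ℂ] ω 2) = (-(q:ℂ)^4) • u q 2 := by
  simp only [Amap, LinearMap.sub_apply, LinearMap.id_apply, σmap_apply, σval, u,
    Matrix.cons_val_zero, Matrix.cons_val_one, Matrix.head_cons, Matrix.cons_val_two,
    Matrix.tail_cons]
  match_scalars <;> field_simp <;> ring

lemma range_Amap (q : ℝ) (hq : (q:ℂ) ≠ 0) :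
    LinearMap.range (Amap q) = Submodule.span ℂ (Set.range (u q)) := by
  apply le_antisymm
  · rw [LinearMap.range_eq_map, ← basisVV.span_eq, Submodule.map_span, Submodule.span_le]
    rintro _ ⟨_, ⟨p, rfl⟩, rfl⟩
    rw [basisVV_apply]
    have m0 : u q 0 ∈ Submodule.span ℂ (Set.range (u q)) := Submodule.subset_span ⟨0, rfl⟩
    have m1 : u q 1 ∈ Submodule.span ℂ (Set.range (u q)) := Submodule.subset_span ⟨1, rfl⟩
    have m2 : u q 2 ∈ Submodule.span ℂ (Set.range (u q)) := Submodule.subset_span ⟨2, rfl⟩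
    rcases p with ⟨a, b⟩
    fin_cases a <;> fin_cases b <;>
      simp only [Fin.zero_eta, Fin.mk_one, Fin.reduceFinMk]
    · rw [im_diag q 0]; exact Submodule.zero_mem _
    · rw [im01 q]; exact m0
    · rw [im02 q]; exact m1
    · rw [im10 q hq]; exact Submodule.smul_mem _ _ m0
    · rw [im_diag q 1]; exact Submodule.zero_mem _
    · rw [im12 q hq]; exact Submodule.smul_mem _ _ m2
    · rw [im20 q hq]; exact Submodule.smul_mem _ _ m1
    · rw [im21 q]; exact m2
    · rw [im_diag q 2]; exact Submodule.zero_mem _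
  · rw [Submodule.span_le]
    rintro _ ⟨i, rfl⟩
    fin_cases i
    · exact ⟨ω 0 ⊗ₜ[ℂ] ω 1, im01 q⟩
    · exact ⟨ω 0 ⊗ₜ[ℂ] ω 2, im02 q⟩
    · exact ⟨ω 2 ⊗ₜ[ℂ] ω 1, im21 q⟩

lemma repr_tensor (a b : Fin 3) :
    basisVV.repr (ω a ⊗ₜ[ℂ] ω b) = Finsupp.single (a, b) 1 := by
  rw [← basisVV_apply (a, b)]; exact basisVV.repr_self _

lemma u_indep (q : ℝ) (hq : (q:ℂ) ≠ 0) : LinearIndependent ℂ (u q) := by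
  rw [Fintype.linearIndependent_iff]
  intro g hg i
  have key : ∀ p : Fin 3 × Fin 3,
      basisVV.repr (∑ j : Fin 3, g j • u q j) p = 0 := by
    intro p; rw [hg]; simp
  have h0 := key (0, 1)
  have h1 := key (0, 2)
  have h2 := key (2, 1)
  simp [u, Fin.sum_univ_three, repr_tensor, Finsupp.single_apply,
    pow_ne_zero_iff, hq] at h0 h1 h2
  fin_cases i <;> assumption

lemma sq_rel (q : ℝ) (hq : (q:ℂ) ≠ 0) :
    σmap q ∘ₗ σmap q = (1 - (q:ℂ)^2) • σmap q + ((q:ℂ)^2) • LinearMap.id := by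
  apply basisVV.ext
  rintro ⟨a, b⟩
  rw [basisVV_apply]
  fin_cases a <;> fin_cases b <;>
    simp [σmap_apply, σval, smul_smul, smul_add] <;>
    match_scalars <;> field_simp <;> ring

lemma hA_sq (q : ℝ) (hq : (q:ℂ) ≠ 0) :
    Amap q ∘ₗ Amap q = (1 + (q:ℂ)^2) • Amap q := by
  simp only [Amap, LinearMap.sub_comp, LinearMap.comp_sub, LinearMap.id_comp,
    LinearMap.comp_id, sq_rel q hq]
  module

/-- for the inverse braiding `σ⁻¹` (characterised by `σ⁻¹ ∘ σ = σ ∘ σ⁻¹ = id`),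
the antisymmetriser `A⁽²⁾_{σ⁻¹} = id − σ⁻¹` satisfies
`A⁽²⁾_{σ⁻¹} ∘ A⁽²⁾_{σ⁻¹} = (1+q⁻²) · A⁽²⁾_{σ⁻¹}` and has rank 3. -/
theorem A2_inverse_braiding (q : ℝ) (hq0 : 0 < q) (hq1 : q < 1)
    (σinv : (V ⊗[ℂ] V) →ₗ[ℂ] (V ⊗[ℂ] V))
    (hinv₁ : σinv ∘ₗ σmap q = LinearMap.id)
    (hinv₂ : σmap q ∘ₗ σinv = LinearMap.id) :
    (LinearMap.id - σinv) ∘ₗ (LinearMap.id - σinv) =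
        (1 + ((q : ℂ) ^ 2)⁻¹) • (LinearMap.id - σinv) ∧
      Module.finrank ℂ (LinearMap.range (LinearMap.id - σinv)) = 3 := by
  have hq : (q : ℂ) ≠ 0 := by
    exact_mod_cast ne_of_gt hq0
  have hq2 : ((q:ℂ)^2) ≠ 0 := pow_ne_zero _ hq
  set T : (V ⊗[ℂ] V) →ₗ[ℂ] (V ⊗[ℂ] V) :=
    ((q:ℂ)^2)⁻¹ • (σmap q - (1-(q:ℂ)^2) • LinearMap.id) with hTdef
  have hT : σmap q ∘ₗ T = LinearMap.id := by
    rw [hTdef]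
    simp only [LinearMap.comp_smul, LinearMap.comp_sub, LinearMap.comp_id, sq_rel q hq]
    match_scalars <;> field_simp <;> ring
  have hσinv : σinv = T := by
    calc σinv = σinv ∘ₗ (σmap q ∘ₗ T) := by rw [hT, LinearMap.comp_id]
      _ = (σinv ∘ₗ σmap q) ∘ₗ T := by rw [LinearMap.comp_assoc]
      _ = T := by rw [hinv₁, LinearMap.id_comp]
  have hAs : (LinearMap.id - σinv) = ((q:ℂ)^2)⁻¹ • Amap q := by
    rw [hσinv, hTdef]
    simp only [Amap]
    match_scalars <;> field_simp <;> ring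
  constructor
  · rw [hAs]
    simp only [LinearMap.comp_smul, LinearMap.smul_comp, hA_sq q hq, smul_smul]
    congr 1
    field_simp
    ring
  · rw [hAs, LinearMap.range_smul _ _ (inv_ne_zero hq2), range_Amap q hq,
      finrank_span_eq_card (u_indep q hq)]
    simp

end
end
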